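/- Let k and ℓ be integers with 3 ≤ k ≤ ℓ and let G_{k,ℓ} be the graph described in the context. Then every total dominating set of G_{k,ℓ} that does not contain the vertex u has at least ℓ vertices. -/
import Mathlib


/-- Vertices of `G_{k,ℓ}`: triangle vertices `t_{i,j}` as `Sum.inl (i,j)`
(0-indexed, `i : Fin (k+ℓ-2)`, `j : Fin 3`), and `u = Sum.inr false`,
`v = Sum.inr true`. -/
abbrev GklV (k l : ℕ) := (Fin (k + l - 2) × Fin 3) ⊕ Bool

/-- Edge relation of `G_{k,ℓ}`: triangles on each `t_{i,·}`; `u` adjacent to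
`t_{i,1}` for `i ≤ k-1` (0-indexed `i.val < k-1`, `j = 0`) and to all `t_{i,j}`
for `i ≥ k` (0-indexed `k-1 ≤ i.val`); `v` adjacent to all `t_{i,j}` for
`i ≤ k-1` and to `t_{i,1}`, `t_{i,2}` for `i ≥ k`; `u` and `v` nonadjacent. -/
def GklRel (k l : ℕ) : GklV k l → GklV k l → Prop
  | .inl p, .inl q => p.1 = q.1
  | .inr false, .inl p => (p.1.val < k - 1 ∧ p.2.val = 0) ∨ k - 1 ≤ p.1.val
  | .inr true, .inl p =>
      p.1.val < k - 1 ∨ (k - 1 ≤ p.1.val ∧ (p.2.val = 0 ∨ p.2.val = 1))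
  | _, _ => False

/-- The graph `G_{k,ℓ}`. -/
def Gkl (k l : ℕ) : SimpleGraph (GklV k l) := SimpleGraph.fromRel (GklRel k l)

/-- `D` is a total dominating set of `G`. -/
def IsTotalDomSet {V : Type*} (G : SimpleGraph V) (D : Finset V) : Prop :=
  ∀ v : V, ∃ d ∈ D, G.Adj v d

/-- Every total dominating set of `G_{k,ℓ}` not containing `u` has at least
`ℓ` vertices. -/
theorem stmt9 (k l : ℕ) (hk : 3 ≤ k) (hkl : k ≤ l)
    (D : Finset (GklV k l)) (hD : IsTotalDomSet (Gkl k l) D)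
    (hu : (Sum.inr false : GklV k l) ∉ D) :
    l ≤ D.card := by
  classical
  set φ : GklV k l → ℕ := fun x => match x with
    | .inl p => if k - 1 ≤ p.1.val then p.1.val + 1 else 0
    | .inr _ => 0 with hφ
  -- high indices
  have hA : ∀ n, n ∈ Finset.Ico (k-1) (k+l-2) → (n+1) ∈ D.image φ := by
    intro n hn
    simp only [Finset.mem_Ico] at hn
    obtain ⟨d, hd, hadj⟩ := hD (Sum.inl (⟨n, hn.2⟩, ⟨2, by omega⟩))
    rw [Gkl, SimpleGraph.fromRel_adj] at hadj
    obtain ⟨hne, hrel⟩ := hadj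
    match d with
    | .inl q =>
      have hq : q.1.val = n := by
        rcases hrel with h | h <;> simp only [GklRel] at h <;>
          simp [Fin.ext_iff] at h <;> omega
      refine Finset.mem_image.2 ⟨Sum.inl q, hd, ?_⟩
      simp only [hφ, hq, if_pos hn.1]
    | .inr false => exact absurd hd hu
    | .inr true =>
      exfalso
      rcases hrel with h | h <;> simp only [GklRel] at h
      omega
  have hB : 0 ∈ D.image φ := by
    obtain ⟨d, hd, hadj⟩ := hD (Sum.inl (⟨0, by omega⟩, ⟨2, by omega⟩))
    rw [Gkl, SimpleGraph.fromRel_adj] at hadj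
    obtain ⟨hne, hrel⟩ := hadj
    match d with
    | .inl q =>
      have hq : q.1.val = 0 := by
        rcases hrel with h | h <;> simp only [GklRel] at h <;>
          simp [Fin.ext_iff] at h <;> omega
      refine Finset.mem_image.2 ⟨Sum.inl q, hd, ?_⟩
      simp only [hφ, hq]
      rw [if_neg (by omega)]
    | .inr false => exact absurd hd hu
    | .inr true => exact Finset.mem_image.2 ⟨Sum.inr true, hd, rfl⟩
  set T : Finset ℕ := insert 0 ((Finset.Ico (k-1) (k+l-2)).image (· + 1)) with hT
  have hsub : T ⊆ D.image φ := by
    rw [hT]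
    refine Finset.insert_subset hB ?_
    intro m hm
    obtain ⟨n, hn, rfl⟩ := Finset.mem_image.1 hm
    exact hA n hn
  have hcard : T.card = l := by
    rw [hT, Finset.card_insert_of_notMem, Finset.card_image_of_injective _
      (fun a b h => by omega), Nat.card_Ico]
    · omega
    · intro h
      obtain ⟨n, _, hn⟩ := Finset.mem_image.1 h
      omega
  calc l = T.card := hcard.symm
    _ ≤ (D.image φ).card := Finset.card_le_card hsub
    _ ≤ D.card := Finset.card_image_le
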